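/- arXiv:1710.07970 — 4 statements merged into one kernel-verified Lean document; each statement's English description precedes it below -/
import Mathlib

section
/- Let (X, 𝒜, ν) be a probability space and let T : X → X be a measure-preserving transformation. Let φ : X → ℝ be a measurable function and let L < γ < Γ be real numbers with φ(x) ≥ L for all x ∈ X. Let ε > 0 and set κ = ε(Γ − γ)/(Γ − L). If ν({x ∈ X : φ(x) > Γ}) > 1 − εκ, then there exists a measurable set A ⊆ X with ν(A) > 1 − ε such that for every x ∈ A, liminf_{N→∞} (1/N)·#{n ∈ {1, …, N} : n is a γ-Pliss time for x} ≥ 1 − ε. -/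
open MeasureTheory Filter

section Aux

variable {X : Type*}

/-- The combinatorial Pliss-type lemma: if all `c j ≤ Δ`, then every partial sum
`∑_{j<m} c j` with `m ≤ N` is at most `Δ` times the number of Pliss times in `[1, N]`. -/
private lemma pliss_count (c : ℕ → ℝ) (Δ : ℝ) (hΔ0 : 0 ≤ Δ) (hc : ∀ j, c j ≤ Δ) (N : ℕ) :
    ∀ m ≤ N, ∑ j ∈ Finset.range m, c j ≤
      Δ * ((Finset.Icc 1 N).filter (fun n => ∀ k, k < n →
        (∑ j ∈ Finset.range k, c j) ≤ ∑ j ∈ Finset.range n, c j)).card := by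
  classical
  set Q : ℕ → Prop := fun n => ∀ k, k < n →
    (∑ j ∈ Finset.range k, c j) ≤ ∑ j ∈ Finset.range n, c j with hQ
  induction N with
  | zero =>
    intro m hm
    interval_cases m
    simp
  | succ N ih =>
    have hins : Finset.Icc 1 (N + 1) = insert (N + 1) (Finset.Icc 1 N) := by
      ext k; simp only [Finset.mem_Icc, Finset.mem_insert]; omega
    have hnotmem : (N + 1) ∉ Finset.Icc 1 N := by simp
    have hcard : ((Finset.Icc 1 N).filter Q).card ≤ ((Finset.Icc 1 (N + 1)).filter Q).card := by
      apply Finset.card_le_card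
      apply Finset.filter_subset_filter
      rw [hins]; exact Finset.subset_insert _ _
    have hmul : Δ * ((Finset.Icc 1 N).filter Q).card ≤
        Δ * ((Finset.Icc 1 (N + 1)).filter Q).card := by
      apply mul_le_mul_of_nonneg_left _ hΔ0
      exact_mod_cast hcard
    intro m hm
    rcases Nat.lt_or_ge m (N + 1) with h | h
    · exact le_trans (ih m (Nat.lt_succ_iff.mp h)) hmul
    · have hm' : m = N + 1 := le_antisymm hm h
      subst hm'
      by_cases hQn : Q (N + 1)
      · have hfil : (Finset.Icc 1 (N + 1)).filter Q
            = insert (N + 1) ((Finset.Icc 1 N).filter Q) := by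
          rw [hins, Finset.filter_insert, if_pos hQn]
        have hcard' : (((Finset.Icc 1 (N + 1)).filter Q).card : ℝ)
            = ((Finset.Icc 1 N).filter Q).card + 1 := by
          rw [hfil, Finset.card_insert_of_notMem (fun hmem => hnotmem (Finset.mem_filter.mp hmem).1)]
          push_cast; ring
        have h1 : ∑ j ∈ Finset.range (N + 1), c j
            = (∑ j ∈ Finset.range N, c j) + c N := Finset.sum_range_succ c N
        have h2 := ih N le_rfl
        have h3 := hc N
        rw [h1, hcard']
        linarith
      · have hQn' : ∃ k, k < N + 1 ∧
            ∑ j ∈ Finset.range (N + 1), c j < ∑ j ∈ Finset.range k, c j := by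
          by_contra hcon
          push_neg at hcon
          exact hQn fun k hk => hcon k hk
        obtain ⟨k, hk, hlt⟩ := hQn' 
        have hkN : k ≤ N := by omega
        have h2 := ih k hkN
        calc ∑ j ∈ Finset.range (N + 1), c j ≤ ∑ j ∈ Finset.range k, c j := hlt.le
          _ ≤ Δ * ((Finset.Icc 1 N).filter Q).card := h2
          _ ≤ _ := hmul

/-- Running maximum of the Birkhoff sums (with value `0` at time `0`). -/
private noncomputable def birkMax (T : X → X) (g : X → ℝ) : ℕ → X → ℝ
  | 0 => fun _ => 0
  | n + 1 => fun x => max (birkMax T g n x) (∑ j ∈ Finset.range (n + 1), g (T^[j] x))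

private lemma birkMax_nonneg (T : X → X) (g : X → ℝ) (n : ℕ) (x : X) :
    0 ≤ birkMax T g n x := by
  induction n with
  | zero => simp [birkMax]
  | succ n ih => exact le_trans ih (le_max_left _ _)

private lemma birkMax_le_succ (T : X → X) (g : X → ℝ) (n : ℕ) (x : X) :
    birkMax T g n x ≤ birkMax T g (n + 1) x := le_max_left _ _

private lemma birkMax_mono (T : X → X) (g : X → ℝ) {m n : ℕ} (h : m ≤ n) (x : X) :
    birkMax T g m x ≤ birkMax T g n x := by
  induction n with
  | zero => simp_all
  | succ n ih =>
    rcases Nat.lt_or_ge m (n + 1) with h' | h'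
    · exact le_trans (ih (Nat.lt_succ_iff.mp h')) (birkMax_le_succ T g n x)
    · have : m = n + 1 := le_antisymm h h'
      subst this; exact le_rfl

private lemma sum_le_birkMax (T : X → X) (g : X → ℝ) (n : ℕ) (x : X) :
    ∑ j ∈ Finset.range n, g (T^[j] x) ≤ birkMax T g n x := by
  cases n with
  | zero => simp [birkMax]
  | succ n => exact le_max_right _ _

private lemma birkMax_key (T : X → X) (g : X → ℝ) (n : ℕ) (x : X) :
    birkMax T g (n + 1) x ≤ max 0 (g x + birkMax T g n (T x)) := by
  induction n with
  | zero =>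
    have : birkMax T g 1 x = max 0 (g x) := by
      simp [birkMax]
    rw [this]
    simp [birkMax]
  | succ n ih =>
    have hsum : ∑ j ∈ Finset.range (n + 2), g (T^[j] x)
        = (∑ j ∈ Finset.range (n + 1), g (T^[j] (T x))) + g x := by
      rw [Finset.sum_range_succ' (fun j => g (T^[j] x)) (n + 1)]
      simp [Function.iterate_succ_apply]
    have h1 : birkMax T g (n + 1) x ≤ max 0 (g x + birkMax T g (n + 1) (T x)) :=
      le_trans ih (max_le_max le_rfl (by linarith [birkMax_le_succ T g n (T x)]))
    have h2 : ∑ j ∈ Finset.range (n + 2), g (T^[j] x)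
        ≤ g x + birkMax T g (n + 1) (T x) := by
      rw [hsum]
      linarith [sum_le_birkMax T g (n + 1) (T x)]
    exact max_le h1 (le_trans h2 (le_max_right _ _))

private lemma birkMax_measurable [MeasurableSpace X] {T : X → X} {g : X → ℝ}
    (hT : Measurable T) (hg : Measurable g) (n : ℕ) :
    Measurable (birkMax T g n) := by
  induction n with
  | zero => simpa [birkMax] using measurable_const
  | succ n ih =>
    exact Measurable.max ih (Finset.measurable_sum _ fun j _ => hg.comp (hT.iterate j))

private lemma birkMax_integrable [MeasurableSpace X] {ν : Measure X} {T : X → X} {g : X → ℝ}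
    (hT : MeasurePreserving T ν ν) (hgm : Measurable g) (hg : Integrable g ν) (n : ℕ) :
    Integrable (birkMax T g n) ν := by
  have hSInt : ∀ m : ℕ, Integrable (fun x => ∑ j ∈ Finset.range m, g (T^[j] x)) ν := by
    intro m
    apply integrable_finset_sum
    intro j _
    exact ((hT.iterate j).integrable_comp hg.aestronglyMeasurable).mpr hg
  induction n with
  | zero => simpa [birkMax] using integrable_const (0 : ℝ)
  | succ n ih =>
    have := ih.sup (hSInt (n + 1))
    exact this.congr (Filter.Eventually.of_forall fun x => rfl)

end Aux

private lemma liminf_ge_aux (u : ℕ → ℝ) (a : ℝ) (hub : ∀ N, u N ≤ 1)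
    (h : ∀ᶠ N in atTop, a ≤ u N) : a ≤ liminf u atTop :=
  Filter.le_liminf_of_le ((Filter.isBoundedUnder_of ⟨1, hub⟩).isCoboundedUnder_ge) h

/-- **Density of Pliss times.** Let `T` be a measure-preserving transformation of a
probability space `(X, ν)`, let `φ : X → ℝ` be measurable with `φ ≥ L` everywhere, let
`L < γ < Γ`, `ε > 0` and `κ = ε(Γ − γ)/(Γ − L)`. If `ν {φ > Γ} > 1 − εκ`, then there is a
measurable set `A` with `ν A > 1 − ε` on which the asymptotic frequency of `γ`-Pliss times
(`n` is a `γ`-Pliss time for `x` if `∑_{j=m}^{n−1} φ(T^j x) ≥ γ(n−m)` for all `0 ≤ m < n`)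
is at least `1 − ε`. -/
theorem density_of_pliss_times
    {X : Type*} [MeasurableSpace X] (ν : Measure X) [IsProbabilityMeasure ν]
    (T : X → X) (hT : MeasurePreserving T ν ν)
    (φ : X → ℝ) (hφ : Measurable φ)
    (L γ Γ : ℝ) (hLγ : L < γ) (hγΓ : γ < Γ)
    (hbound : ∀ x, L ≤ φ x)
    (ε κ : ℝ) (hε : 0 < ε) (hκ : κ = ε * (Γ - γ) / (Γ - L))
    (hmeas : ν {x | Γ < φ x} > ENNReal.ofReal (1 - ε * κ)) :
    ∃ A : Set X, MeasurableSet A ∧ ν A > ENNReal.ofReal (1 - ε) ∧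
      ∀ x ∈ A,
        (1 - ε : ℝ) ≤
          liminf (fun N : ℕ =>
            (((Finset.Icc 1 N).filter (fun n =>
              ∀ m : ℕ, m < n →
                γ * ((n : ℝ) - (m : ℝ)) ≤ ∑ j ∈ Finset.Ico m n, φ (T^[j] x))).card : ℝ) / N)
            atTop := by
  classical
  -- the sequence whose liminf we study is bounded above by 1
  have hub : ∀ (x : X) (N : ℕ),
      (((Finset.Icc 1 N).filter (fun n =>
        ∀ m : ℕ, m < n →
          γ * ((n : ℝ) - (m : ℝ)) ≤ ∑ j ∈ Finset.Ico m n, φ (T^[j] x))).card : ℝ) / N ≤ 1 := by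
    intro x N
    rcases Nat.eq_zero_or_pos N with h | h
    · subst h; simp
    · apply div_le_one_of_le₀
      · have h1 := Finset.card_le_card (Finset.filter_subset (fun n =>
          ∀ m : ℕ, m < n → γ * ((n : ℝ) - (m : ℝ)) ≤ ∑ j ∈ Finset.Ico m n, φ (T^[j] x))
          (Finset.Icc 1 N))
        have hIcc : (Finset.Icc 1 N).card = N := by rw [Nat.card_Icc]; omega
        rw [hIcc] at h1
        exact_mod_cast h1
      · positivity
  rcases le_or_gt 1 ε with hε1 | hε1
  · -- trivial case `ε ≥ 1`
    refine ⟨Set.univ, MeasurableSet.univ, ?_, ?_⟩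
    · have h0 : ENNReal.ofReal (1 - ε) = 0 := by
        rw [ENNReal.ofReal_eq_zero]; linarith
      rw [h0]
      simp
    · intro x _
      apply liminf_ge_aux _ _ (hub x)
      apply Filter.Eventually.of_forall
      intro N
      have : (0 : ℝ) ≤ (((Finset.Icc 1 N).filter (fun n =>
          ∀ m : ℕ, m < n →
            γ * ((n : ℝ) - (m : ℝ)) ≤ ∑ j ∈ Finset.Ico m n, φ (T^[j] x))).card : ℝ) / N := by
        positivity
      linarith
  -- main case `ε < 1`
  have hΓL : 0 < Γ - L := by linarith
  have hΓγ : 0 < Γ - γ := by linarith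
  have hκ0 : 0 < κ := by rw [hκ]; positivity
  have hκΓL : κ * (Γ - L) = ε * (Γ - γ) := by
    rw [hκ]; field_simp
  set B : Set X := {y | φ y ≤ Γ} with hBdef
  have hBm : MeasurableSet B := measurableSet_le hφ measurable_const
  have hBc : Bᶜ = {x | Γ < φ x} := by
    ext y; simp [hBdef, not_le]
  have hνB : (ν B).toReal < ε * κ := by
    have h1 : ν B + ν Bᶜ = 1 := by
      rw [measure_add_measure_compl hBm, measure_univ]
    have h2 : ENNReal.ofReal (1 - ε * κ) < ν Bᶜ := by rw [hBc]; exact hmeas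
    have h3 : (1 - ε * κ) ≤ (ENNReal.ofReal (1 - ε * κ)).toReal := by
      rw [ENNReal.toReal_ofReal']; exact le_max_left _ _
    have h4 : (ENNReal.ofReal (1 - ε * κ)).toReal < (ν Bᶜ).toReal :=
      (ENNReal.toReal_lt_toReal ENNReal.ofReal_ne_top (measure_ne_top ν _)).mpr h2
    have h5 : (ν B).toReal + (ν Bᶜ).toReal = 1 := by
      rw [← ENNReal.toReal_add (measure_ne_top _ _) (measure_ne_top _ _), h1]; simp
    linarith
  set f : X → ℝ := B.indicator (fun _ => (1 : ℝ)) with hfdef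
  set g : X → ℝ := fun x => f x - κ with hgdef
  have hfm : Measurable f := measurable_const.indicator hBm
  have hfInt : Integrable f ν := (integrable_const (1 : ℝ)).indicator hBm
  have hf_nonneg : ∀ x, 0 ≤ f x := fun x => Set.indicator_nonneg (fun _ _ => zero_le_one) x
  have hgm : Measurable g := hfm.sub measurable_const
  have hgInt : Integrable g ν := hfInt.sub (integrable_const κ)
  have hTm : Measurable T := hT.measurable
  -- the maximal-function level sets
  have hEm : ∀ N : ℕ, MeasurableSet {x | 0 < birkMax T g N x} :=
    fun N => measurableSet_lt measurable_const (birkMax_measurable hTm hgm N)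
  -- Hopf maximal inequality
  have hKey : ∀ N : ℕ, κ * (ν {x | 0 < birkMax T g N x}).toReal ≤ (ν B).toReal := by
    intro N
    set E : Set X := {x | 0 < birkMax T g N x} with hEdef
    have hEmeas : MeasurableSet E := hEm N
    have hMInt : Integrable (birkMax T g N) ν := birkMax_integrable hT hgm hgInt N
    have hMTInt : Integrable (fun x => birkMax T g N (T x)) ν :=
      (hT.integrable_comp (birkMax_measurable hTm hgm N).aestronglyMeasurable).mpr hMInt
    -- pointwise inequality
    have hpt : ∀ x, birkMax T g N x - birkMax T g N (T x) ≤ E.indicator g x := by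
      intro x
      by_cases hx : x ∈ E
      · rw [Set.indicator_of_mem hx]
        have hx' : 0 < birkMax T g N x := hx
        cases N with
        | zero => simp [birkMax] at hx'
        | succ n =>
          have h1 := birkMax_key T g n x
          have h2 : birkMax T g (n + 1) x ≤ g x + birkMax T g n (T x) := by
            rcases max_cases (0 : ℝ) (g x + birkMax T g n (T x)) with ⟨heq, _⟩ | ⟨heq, _⟩
            · rw [heq] at h1; linarith
            · rw [heq] at h1; exact h1
          have h3 : birkMax T g n (T x) ≤ birkMax T g (n + 1) (T x) :=
            birkMax_le_succ T g n (T x)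
          linarith
      · rw [Set.indicator_of_notMem hx]
        have h0 : birkMax T g N x ≤ 0 := not_lt.mp hx
        have h1 : 0 ≤ birkMax T g N x := birkMax_nonneg T g N x
        have h2 : 0 ≤ birkMax T g N (T x) := birkMax_nonneg T g N (T x)
        linarith
    have hIndInt : Integrable (E.indicator g) ν := hgInt.indicator hEmeas
    have hint1 : ∫ x, (birkMax T g N x - birkMax T g N (T x)) ∂ν = 0 := by
      rw [integral_sub hMInt hMTInt]
      have hcomp : ∫ x, birkMax T g N (T x) ∂ν = ∫ x, birkMax T g N x ∂ν := by
        have := integral_map (μ := ν) hTm.aemeasurable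
          (f := birkMax T g N) ?_
        · rw [hT.map_eq] at this; exact this.symm
        · rw [hT.map_eq]
          exact (birkMax_measurable hTm hgm N).aestronglyMeasurable
      rw [hcomp]; ring
    have h0le : (0 : ℝ) ≤ ∫ x, E.indicator g x ∂ν := by
      rw [← hint1]
      exact integral_mono (hMInt.sub hMTInt) hIndInt hpt
    have heq1 : ∫ x, E.indicator g x ∂ν = (∫ x in E, f x ∂ν) - κ * (ν E).toReal := by
      rw [integral_indicator hEmeas]
      have h : ∫ x in E, g x ∂ν = (∫ x in E, f x ∂ν) - ∫ x in E, (κ : ℝ) ∂ν := by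
        rw [← integral_sub hfInt.integrableOn (integrableOn_const (measure_ne_top ν E))]
      rw [h, setIntegral_const, smul_eq_mul, mul_comm]
      rfl
    have heq2 : ∫ x, f x ∂ν = (ν B).toReal := by
      rw [hfdef, integral_indicator hBm, setIntegral_const]
      simp
      rfl
    have hle2 : ∫ x in E, f x ∂ν ≤ (ν B).toReal := by
      rw [← heq2]
      exact setIntegral_le_integral hfInt (Filter.Eventually.of_forall hf_nonneg)
    rw [heq1] at h0le
    linarith
  -- the exceptional set
  set Einf : Set X := ⋃ N : ℕ, {x | 0 < birkMax T g N x} with hEinfdef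
  have hEinfm : MeasurableSet Einf := MeasurableSet.iUnion hEm
  set c : ℝ := (ν B).toReal / κ with hcdef
  have hc0 : 0 ≤ c := by positivity
  have hcε : c < ε := (div_lt_iff₀ hκ0).mpr (by linarith)
  have hEinf_le : ν Einf ≤ ENNReal.ofReal c := by
    have hmono : Monotone (fun N : ℕ => {x | 0 < birkMax T g N x}) := by
      intro m n hmn x hx
      exact lt_of_lt_of_le hx (birkMax_mono T g hmn x)
    rw [hEinfdef, hmono.directed_le.measure_iUnion]
    apply iSup_le
    intro N
    rw [← ENNReal.ofReal_toReal (measure_ne_top ν _)]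
    apply ENNReal.ofReal_le_ofReal
    rw [hcdef, le_div_iff₀ hκ0, mul_comm]
    exact hKey N
  refine ⟨Einfᶜ, hEinfm.compl, ?_, ?_⟩
  · -- measure bound
    have hνEinf : (ν Einf).toReal ≤ c := by
      have := ENNReal.toReal_mono ENNReal.ofReal_ne_top hEinf_le
      rwa [ENNReal.toReal_ofReal hc0] at this
    have hsum : (ν Einf).toReal + (ν Einfᶜ).toReal = 1 := by
      rw [← ENNReal.toReal_add (measure_ne_top _ _) (measure_ne_top _ _),
        measure_add_measure_compl hEinfm, measure_univ]
      simp
    have h1 : 1 - ε < (ν Einfᶜ).toReal := by linarith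
    rw [gt_iff_lt, ← ENNReal.ofReal_toReal (measure_ne_top ν Einfᶜ)]
    exact (ENNReal.ofReal_lt_ofReal_iff_of_nonneg (by linarith)).mpr h1
  · intro x hx
    have hM0 : ∀ N : ℕ, birkMax T g N x ≤ 0 := by
      intro N
      by_contra h
      exact hx (Set.mem_iUnion.mpr ⟨N, not_le.mp h⟩)
    have hbκ : ∀ N : ℕ,
        (((Finset.range N).filter (fun j => φ (T^[j] x) ≤ Γ)).card : ℝ) ≤ κ * N := by
      intro N
      have h1 : ∑ j ∈ Finset.range N, g (T^[j] x) ≤ 0 :=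
        le_trans (sum_le_birkMax T g N x) (hM0 N)
      have h2 : ∑ j ∈ Finset.range N, g (T^[j] x)
          = (∑ j ∈ Finset.range N, f (T^[j] x)) - κ * N := by
        simp only [hgdef]
        rw [Finset.sum_sub_distrib, Finset.sum_const, Finset.card_range, nsmul_eq_mul,
          mul_comm]
      have h3 : ∑ j ∈ Finset.range N, f (T^[j] x)
          = (((Finset.range N).filter (fun j => φ (T^[j] x) ≤ Γ)).card : ℝ) := by
        rw [← Finset.sum_boole]
        apply Finset.sum_congr rfl
        intro j _
        by_cases h : φ (T^[j] x) ≤ Γ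
        · simp [hfdef, Set.indicator_apply, hBdef, h]
        · simp [hfdef, Set.indicator_apply, hBdef, h]
      rw [h2, h3] at h1
      linarith
    apply liminf_ge_aux _ _ (hub x)
    filter_upwards [eventually_ge_atTop 1] with N hN
    have hN0 : (0 : ℝ) < N := by exact_mod_cast hN
    set cseq : ℕ → ℝ := fun j => min (φ (T^[j] x)) Γ - γ with hcseq
    have hcle : ∀ j, cseq j ≤ Γ - γ := fun j => by
      simp only [hcseq]; linarith [min_le_right (φ (T^[j] x)) Γ]
    have hkey := pliss_count cseq (Γ - γ) hΓγ.le hcle N N le_rfl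
    have hsub : (Finset.Icc 1 N).filter (fun n => ∀ k, k < n →
        (∑ j ∈ Finset.range k, cseq j) ≤ ∑ j ∈ Finset.range n, cseq j) ⊆
        (Finset.Icc 1 N).filter (fun n => ∀ m : ℕ, m < n →
          γ * ((n : ℝ) - (m : ℝ)) ≤ ∑ j ∈ Finset.Ico m n, φ (T^[j] x)) := by
      intro n hn
      rw [Finset.mem_filter] at hn ⊢
      refine ⟨hn.1, ?_⟩
      intro m hm
      have hmn : m ≤ n := hm.le
      have h2 : 0 ≤ ∑ j ∈ Finset.Ico m n, cseq j := by
        rw [Finset.sum_Ico_eq_sub _ hmn]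
        linarith [hn.2 m hm]
      have h3 : ∑ j ∈ Finset.Ico m n, cseq j
          = (∑ j ∈ Finset.Ico m n, min (φ (T^[j] x)) Γ) - γ * ((n : ℝ) - m) := by
        simp only [hcseq]
        rw [Finset.sum_sub_distrib, Finset.sum_const, Nat.card_Ico, nsmul_eq_mul,
          Nat.cast_sub hmn]
        ring
      have h4 : ∑ j ∈ Finset.Ico m n, min (φ (T^[j] x)) Γ
          ≤ ∑ j ∈ Finset.Ico m n, φ (T^[j] x) :=
        Finset.sum_le_sum fun j _ => min_le_left _ _
      linarith
    have hcards := Finset.card_le_card hsub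
    have hlow : (1 - ε) * N * (Γ - γ) ≤ ∑ j ∈ Finset.range N, cseq j := by
      have heach : ∀ j ∈ Finset.range N,
          (Γ - γ) - (if φ (T^[j] x) ≤ Γ then (Γ - L) else 0) ≤ cseq j := by
        intro j _
        by_cases h : φ (T^[j] x) ≤ Γ
        · simp only [hcseq, if_pos h, min_eq_left h]
          linarith [hbound (T^[j] x)]
        · simp only [hcseq, if_neg h, min_eq_right (le_of_not_ge h)]
          linarith
      have hsum := Finset.sum_le_sum heach
      rw [Finset.sum_sub_distrib, Finset.sum_const, Finset.card_range, nsmul_eq_mul] at hsum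
      have hite : ∑ j ∈ Finset.range N, (if φ (T^[j] x) ≤ Γ then (Γ - L) else 0)
          = (Γ - L) * (((Finset.range N).filter (fun j => φ (T^[j] x) ≤ Γ)).card : ℝ) := by
        rw [← Finset.sum_boole, Finset.mul_sum]
        apply Finset.sum_congr rfl
        intro j _
        by_cases h : φ (T^[j] x) ≤ Γ <;> simp [h]
      rw [hite] at hsum
      have hb := hbκ N
      have h5 : (Γ - L) * (((Finset.range N).filter (fun j => φ (T^[j] x) ≤ Γ)).card : ℝ)
          ≤ (Γ - L) * (κ * N) := mul_le_mul_of_nonneg_left hb hΓL.le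
      have h6 : (Γ - L) * (κ * N) = ε * (Γ - γ) * N := by
        rw [← mul_assoc, mul_comm (Γ - L) κ, hκΓL]
      linarith
    have hfinal : (1 - ε) * N ≤
        (((Finset.Icc 1 N).filter (fun n => ∀ m : ℕ, m < n →
          γ * ((n : ℝ) - (m : ℝ)) ≤ ∑ j ∈ Finset.Ico m n, φ (T^[j] x))).card : ℝ) := by
      have h8 : ((1 - ε) * N) * (Γ - γ) ≤
          ((((Finset.Icc 1 N).filter (fun n => ∀ m : ℕ, m < n →
            γ * ((n : ℝ) - (m : ℝ)) ≤ ∑ j ∈ Finset.Ico m n, φ (T^[j] x))).card : ℝ)) * (Γ - γ) := by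
        have h9 : ((((Finset.Icc 1 N).filter (fun n => ∀ k, k < n →
            (∑ j ∈ Finset.range k, cseq j) ≤ ∑ j ∈ Finset.range n, cseq j)).card : ℝ))
            ≤ (((Finset.Icc 1 N).filter (fun n => ∀ m : ℕ, m < n →
              γ * ((n : ℝ) - (m : ℝ)) ≤ ∑ j ∈ Finset.Ico m n, φ (T^[j] x))).card : ℝ) := by
          exact_mod_cast hcards
        nlinarith [hkey, hlow, h9, hΓγ]
      exact le_of_mul_le_mul_right h8 hΓγ
    rw [le_div_iff₀ hN0]
    exact hfinal
end

section
/- Let M be a compact metric space. For a continuous function φ : M → ℝ let U_φ = {x ∈ M : φ(x) > 0}. Then the map (φ, μ) ↦ μ(U_φ), defined on C(M, ℝ) × 𝒫(M) with values in ℝ, is lower semicontinuous with respect to the product of the uniform (sup-norm) topology on C(M, ℝ) and the topology of weak convergence on 𝒫(M). That is, for every (φ, μ) and every ε > 0 there exist a neighborhood 𝒰 of φ in C(M, ℝ) and a neighborhood 𝕌 of μ in 𝒫(M) such that ν(U_ψ) > μ(U_φ) − ε for every (ψ, ν) ∈ 𝒰 × 𝕌. -/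
open MeasureTheory

/-- **Lower semicontinuity of `(φ, μ) ↦ μ{φ > 0}`.** On a compact metric space `M`, for
every continuous `φ : M → ℝ`, every Borel probability measure `μ`, and every `ε > 0`,
there are a neighborhood `𝒰` of `φ` in `C(M, ℝ)` (uniform topology) and a neighborhood
`𝕌` of `μ` in the space of probability measures (weak convergence topology) such that
`ν {ψ > 0} > μ {φ > 0} − ε` for every `(ψ, ν) ∈ 𝒰 × 𝕌`. -/
theorem lower_semicontinuous_measure_of_positivity_set
    {M : Type*} [MetricSpace M] [CompactSpace M] [MeasurableSpace M] [BorelSpace M]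
    (φ : C(M, ℝ)) (μ : ProbabilityMeasure M) (ε : ℝ) (hε : 0 < ε) :
    ∃ 𝒰 ∈ nhds φ, ∃ 𝕌 ∈ nhds μ,
      ∀ ψ ∈ 𝒰, ∀ ν ∈ 𝕌,
        ((ν : Measure M) {x | 0 < ψ x}).toReal >
          ((μ : Measure M) {x | 0 < φ x}).toReal - ε := by
  set c : ℝ := ((μ : Measure M) {x | 0 < φ x}).toReal with hc
  by_cases hcase : c < ε
  · refine ⟨Set.univ, Filter.univ_mem, Set.univ, Filter.univ_mem, fun ψ _ ν _ => ?_⟩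
    have : (0:ℝ) ≤ ((ν : Measure M) {x | 0 < ψ x}).toReal := ENNReal.toReal_nonneg
    linarith
  push_neg at hcase
  -- approximate {φ > 0} from inside by sets {φ > 1/(n+1)}
  set s : ℕ → Set M := fun n => {x | 1 / (n + 1 : ℝ) < φ x} with hs
  have hmono : Monotone s := by
    intro m n hmn x hx
    simp only [hs, Set.mem_setOf_eq] at hx ⊢
    refine lt_of_le_of_lt ?_ hx
    have hmn' : (m : ℝ) ≤ n := Nat.cast_le.mpr hmn
    have h1 : (0:ℝ) < (m:ℝ) + 1 := by positivity
    have h2 : (0:ℝ) < (n:ℝ) + 1 := by positivity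
    rw [div_le_div_iff₀ h2 h1]
    linarith
  have hunion : (⋃ n, s n) = {x | 0 < φ x} := by
    ext x
    simp only [Set.mem_iUnion, hs, Set.mem_setOf_eq]
    constructor
    · rintro ⟨n, hn⟩
      exact lt_trans (by positivity) hn
    · intro hx
      obtain ⟨n, hn⟩ := exists_nat_one_div_lt hx
      exact ⟨n, hn⟩
  have htend : Filter.Tendsto (fun n => (μ : Measure M) (s n)) Filter.atTop
      (nhds ((μ : Measure M) {x | 0 < φ x})) := by
    rw [← hunion]
    exact tendsto_measure_iUnion_atTop hmono
  have htendR : Filter.Tendsto (fun n => ((μ : Measure M) (s n)).toReal) Filter.atTop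
      (nhds c) := by
    rw [hc]
    exact (ENNReal.tendsto_toReal (measure_ne_top _ _)).comp htend
  have hev : ∀ᶠ n in Filter.atTop, c - ε / 2 < ((μ : Measure M) (s n)).toReal := by
    have : c - ε / 2 < c := by linarith
    exact htendR.eventually (eventually_gt_nhds this)
  obtain ⟨n, hn⟩ := hev.exists
  set δ : ℝ := 1 / (n + 1 : ℝ) with hδ
  have hδpos : 0 < δ := by positivity
  -- the open set G
  set G : Set M := s n with hG
  have hGopen : IsOpen G := isOpen_lt continuous_const φ.continuous
  have hμG : ENNReal.ofReal (c - ε / 2) < (μ : Measure M) G := by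
    rw [← ENNReal.ofReal_toReal (measure_ne_top (μ : Measure M) G)]
    exact ENNReal.ofReal_lt_ofReal_iff_of_nonneg (by linarith) |>.mpr hn
  -- neighborhood of μ : measures ν with ν G > c - ε/2
  have hliminf : (μ : Measure M) G ≤
      Filter.liminf (fun ν : ProbabilityMeasure M => (ν : Measure M) G) (nhds μ) :=
    ProbabilityMeasure.le_liminf_measure_open_of_tendsto Filter.tendsto_id hGopen
  have h𝕌 : {ν : ProbabilityMeasure M |
      ENNReal.ofReal (c - ε / 2) < (ν : Measure M) G} ∈ nhds μ :=
    Filter.eventually_lt_of_lt_liminf (lt_of_lt_of_le hμG hliminf)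
  refine ⟨Metric.ball φ (δ / 2), Metric.ball_mem_nhds φ (by positivity),
    _, h𝕌, fun ψ hψ ν hν => ?_⟩
  have hsub : G ⊆ {x | 0 < ψ x} := by
    intro x hx
    have h1 : δ < φ x := hx
    have h2 : dist (ψ x) (φ x) ≤ dist ψ φ := ContinuousMap.dist_apply_le_dist x
    have h3 : dist ψ φ < δ / 2 := hψ
    have h4 : |ψ x - φ x| < δ / 2 := lt_of_le_of_lt (by rw [← Real.dist_eq]; exact h2) h3
    have := abs_lt.mp h4
    simp only [Set.mem_setOf_eq]
    linarith [this.1]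
  have hmono2 : ((ν : Measure M) G).toReal ≤ ((ν : Measure M) {x | 0 < ψ x}).toReal :=
    ENNReal.toReal_mono (measure_ne_top _ _) (measure_mono hsub)
  have hνG : c - ε / 2 < ((ν : Measure M) G).toReal := by
    have := hν
    simp only [Set.mem_setOf_eq] at this
    calc c - ε / 2 = (ENNReal.ofReal (c - ε / 2)).toReal := by
          rw [ENNReal.toReal_ofReal (by linarith)]
      _ < ((ν : Measure M) G).toReal :=
          ENNReal.toReal_strict_mono (measure_ne_top _ _) this
  have : c - ε < ((ν : Measure M) {x | 0 < ψ x}).toReal := by linarith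
  exact this
end

section
/- Let X be a compact metric space and let c ∈ ℝ. For a continuous map g : X → X and a continuous function φ : X → ℝ define Λ(g, φ) = {x ∈ X : ∑_{j=0}^{N−1} φ(g^j x) ≤ cN for every integer N ≥ 1}. Let f, f_n : X → X be continuous maps with f_n → f uniformly, and let ψ, ψ_n : X → ℝ be continuous functions with ψ_n → ψ uniformly. Then every accumulation point of the sets Λ(f_n, ψ_n) belongs to Λ(f, ψ); that is, ⋂_{n≥1} closure(⋃_{k≥n} Λ(f_k, ψ_k)) ⊆ Λ(f, ψ). -/
open Filter

private lemma iter_tendstoUniformly {X : Type*} [MetricSpace X] [CompactSpace X]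
    (f : X → X) (fseq : ℕ → X → X) (hf : Continuous f)
    (hfconv : TendstoUniformly fseq f atTop) (j : ℕ) :
    TendstoUniformly (fun k => (fseq k)^[j]) (f^[j]) atTop := by
  induction j with
  | zero =>
      rw [Metric.tendstoUniformly_iff]
      intro ε hε
      filter_upwards with k x
      simpa using hε
  | succ j ih =>
      rw [Metric.tendstoUniformly_iff]
      intro ε hε
      obtain ⟨δ, hδ, hδ'⟩ := Metric.uniformContinuous_iff.1
        (CompactSpace.uniformContinuous_of_continuous hf) (ε / 2) (by linarith)
      filter_upwards [Metric.tendstoUniformly_iff.1 hfconv (ε / 2) (by linarith),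
        Metric.tendstoUniformly_iff.1 ih δ hδ] with k hk1 hk2 x
      calc dist (f^[j+1] x) ((fseq k)^[j+1] x)
          = dist (f (f^[j] x)) (fseq k ((fseq k)^[j] x)) := by
            rw [Function.iterate_succ_apply', Function.iterate_succ_apply']
        _ ≤ dist (f (f^[j] x)) (f ((fseq k)^[j] x))
            + dist (f ((fseq k)^[j] x)) (fseq k ((fseq k)^[j] x)) := dist_triangle _ _ _
        _ < ε / 2 + ε / 2 := by
            exact add_lt_add (hδ' (hk2 x)) (hk1 _)
        _ = ε := by ring

private lemma comp_tendstoUniformly {X : Type*} [MetricSpace X] [CompactSpace X]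
    (f : X → X) (fseq : ℕ → X → X) (ψ : X → ℝ) (ψseq : ℕ → X → ℝ)
    (hf : Continuous f) (hψ : Continuous ψ)
    (hfconv : TendstoUniformly fseq f atTop)
    (hψconv : TendstoUniformly ψseq ψ atTop) (j : ℕ) :
    TendstoUniformly (fun k x => ψseq k ((fseq k)^[j] x)) (fun x => ψ (f^[j] x)) atTop := by
  have hiter := iter_tendstoUniformly f fseq hf hfconv j
  rw [Metric.tendstoUniformly_iff]
  intro ε hε
  obtain ⟨δ, hδ, hδ'⟩ := Metric.uniformContinuous_iff.1
    (CompactSpace.uniformContinuous_of_continuous hψ) (ε / 2) (by linarith)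
  filter_upwards [Metric.tendstoUniformly_iff.1 hψconv (ε / 2) (by linarith),
    Metric.tendstoUniformly_iff.1 hiter δ hδ] with k hk1 hk2 x
  calc dist (ψ (f^[j] x)) (ψseq k ((fseq k)^[j] x))
      ≤ dist (ψ (f^[j] x)) (ψ ((fseq k)^[j] x))
        + dist (ψ ((fseq k)^[j] x)) (ψseq k ((fseq k)^[j] x)) := dist_triangle _ _ _
    _ < ε / 2 + ε / 2 := by
        exact add_lt_add (hδ' (hk2 x)) (hk1 _)
    _ = ε := by ring

private lemma sum_tendstoUniformly {X : Type*} [MetricSpace X] [CompactSpace X]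
    (f : X → X) (fseq : ℕ → X → X) (ψ : X → ℝ) (ψseq : ℕ → X → ℝ)
    (hf : Continuous f) (hψ : Continuous ψ)
    (hfconv : TendstoUniformly fseq f atTop)
    (hψconv : TendstoUniformly ψseq ψ atTop) (N : ℕ) :
    TendstoUniformly (fun k x => ∑ j ∈ Finset.range N, ψseq k ((fseq k)^[j] x))
      (fun x => ∑ j ∈ Finset.range N, ψ (f^[j] x)) atTop := by
  induction N with
  | zero =>
      rw [Metric.tendstoUniformly_iff]
      intro ε hε
      filter_upwards with k x
      simpa using hε
  | succ N ih =>
      simp only [Finset.sum_range_succ]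
      exact ih.add (comp_tendstoUniformly f fseq ψ ψseq hf hψ hfconv hψconv N)

/-- **Accumulation points of Pesin-like blocks.** Let `X` be a compact metric space and
`c ∈ ℝ`. For `g : X → X` and `φ : X → ℝ` let
`Λ(g, φ) = {x | ∑_{j=0}^{N−1} φ(g^j x) ≤ c·N for all N ≥ 1}`. If continuous maps
`f_n → f` uniformly and continuous functions `ψ_n → ψ` uniformly, then
`⋂_n closure (⋃_{k ≥ n} Λ(f_k, ψ_k)) ⊆ Λ(f, ψ)`. -/
theorem accumulation_of_pesin_like_blocks
    {X : Type*} [MetricSpace X] [CompactSpace X] (c : ℝ)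
    (Λ : (X → X) → (X → ℝ) → Set X)
    (hΛ : ∀ g φ, Λ g φ =
      {x : X | ∀ N : ℕ, 1 ≤ N → ∑ j ∈ Finset.range N, φ (g^[j] x) ≤ c * N})
    (f : X → X) (fseq : ℕ → X → X) (ψ : X → ℝ) (ψseq : ℕ → X → ℝ)
    (hf : Continuous f) (hfseq : ∀ n, Continuous (fseq n))
    (hψ : Continuous ψ) (hψseq : ∀ n, Continuous (ψseq n))
    (hfconv : TendstoUniformly fseq f atTop)
    (hψconv : TendstoUniformly ψseq ψ atTop) :
    ⋂ n : ℕ, closure (⋃ k ∈ {k : ℕ | n ≤ k}, Λ (fseq k) (ψseq k)) ⊆ Λ f ψ := by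
  intro x hx
  rw [hΛ]
  intro N hN
  set S : X → ℝ := fun y => ∑ j ∈ Finset.range N, ψ (f^[j] y) with hS
  have hScont : Continuous S := by
    apply continuous_finset_sum
    intro j _
    exact hψ.comp (hf.iterate j)
  refine le_of_forall_pos_le_add ?_
  intro ε hε
  -- uniform approximation for large k
  have hsum := Metric.tendstoUniformly_iff.1
    (sum_tendstoUniformly f fseq ψ ψseq hf hψ hfconv hψconv N) (ε / 2) (by linarith)
  obtain ⟨n, hn⟩ := eventually_atTop.1 hsum
  -- continuity of S at x
  obtain ⟨δ, hδ, hδ'⟩ := Metric.continuousAt_iff.1 (hScont.continuousAt (x := x)) (ε / 2)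
    (by linarith)
  -- get a nearby point in the union
  have hx' := Set.mem_iInter.1 hx n
  obtain ⟨y, hyU, hyd⟩ := Metric.mem_closure_iff.1 hx' δ hδ
  simp only [Set.mem_iUnion, Set.mem_setOf_eq] at hyU
  obtain ⟨k, hkn, hyk⟩ := hyU
  rw [hΛ] at hyk
  have h1 : dist (S x) (S y) < ε / 2 := by
    have := hδ' (show dist y x < δ by rwa [dist_comm])
    rwa [dist_comm]
  have h2 : dist (S y) (∑ j ∈ Finset.range N, ψseq k ((fseq k)^[j] y)) < ε / 2 :=
    hn k hkn y
  have h3 : ∑ j ∈ Finset.range N, ψseq k ((fseq k)^[j] y) ≤ c * N := hyk N hN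
  have := abs_sub_lt_iff.1 (by simpa [Real.dist_eq] using h1)
  have := abs_sub_lt_iff.1 (by simpa [Real.dist_eq] using h2)
  linarith [(abs_sub_lt_iff.1 (by simpa [Real.dist_eq] using h1)).1,
    (abs_sub_lt_iff.1 (by simpa [Real.dist_eq] using h2)).1]
end

section
/- Let (X, 𝒜, ν) be a probability space and let T : X → X be an invertible bimeasurable measure-preserving transformation. Let φ : X → ℝ be a measurable function, γ ∈ ℝ, and define Λ = {y ∈ X : ∑_{j=1}^{k} φ(T^{−j} y) ≥ γk for every integer k ≥ 1}. Let 0 < ε' < 1 and suppose there exists a measurable set A ⊆ X with ν(A) > 1 − ε' such that for every x ∈ A, liminf_{N→∞} (1/N)·#{n ∈ {1, …, N} : n is a γ-Pliss time for x} > 1 − ε'. Then ν(Λ) ≥ (1 − ε')². -/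
open MeasureTheory Filter

private lemma iter_inv_aux {X : Type*} {T S : X → X}
    (hST : Function.LeftInverse S T) :
    ∀ (j n : ℕ), j ≤ n → ∀ x : X, S^[j] (T^[n] x) = T^[n - j] x := by
  intro j
  induction j with
  | zero => intro n _ x; simp
  | succ j ih =>
      intro n hjn x
      have hn1 : 1 ≤ n := le_trans (Nat.succ_le_succ (Nat.zero_le j)) hjn
      have h1 : S (T^[n] x) = T^[n - 1] x := by
        have : T^[n] x = T (T^[n - 1] x) := by
          conv_lhs => rw [show n = (n - 1) + 1 by omega]
          rw [Function.iterate_succ_apply']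
        rw [this, hST]
      rw [Function.iterate_succ_apply, h1, ih (n - 1) (by omega) x]
      congr 1
      omega

/-- **Measure of Pesin-like blocks.** Let `T` be an invertible bimeasurable
measure-preserving transformation of a probability space `(X, ν)`, with measurable
inverse `S`. Let `φ : X → ℝ` be measurable, `γ ∈ ℝ`, and let
`Λ = {y | ∑_{j=1}^{k} φ(T^{−j} y) ≥ γ·k for all k ≥ 1}`. Let `0 < ε' < 1` and suppose
there is a measurable set `A` with `ν A > 1 − ε'` such that for every `x ∈ A` the
asymptotic frequency of `γ`-Pliss times of `x` exceeds `1 − ε'`. Then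
`ν Λ ≥ (1 − ε')²`. -/
theorem measure_of_pesin_like_block
    {X : Type*} [MeasurableSpace X] (ν : Measure X) [IsProbabilityMeasure ν]
    (T S : X → X) (hTmeas : Measurable T) (hSmeas : Measurable S)
    (hST : Function.LeftInverse S T) (hTS : Function.RightInverse S T)
    (hT : MeasurePreserving T ν ν)
    (φ : X → ℝ) (hφ : Measurable φ) (γ : ℝ)
    (Λ : Set X)
    (hΛ : Λ = {y : X | ∀ k : ℕ, 1 ≤ k →
      γ * (k : ℝ) ≤ ∑ j ∈ Finset.Icc 1 k, φ (S^[j] y)})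
    (ε' : ℝ) (hε'pos : 0 < ε') (hε'lt : ε' < 1)
    (A : Set X) (hAmeas : MeasurableSet A)
    (hAν : ν A > ENNReal.ofReal (1 - ε'))
    (hfreq : ∀ x ∈ A,
      (1 - ε' : ℝ) <
        liminf (fun N : ℕ =>
          (((Finset.Icc 1 N).filter (fun n =>
            ∀ m : ℕ, m < n →
              γ * ((n : ℝ) - (m : ℝ)) ≤ ∑ j ∈ Finset.Ico m n, φ (T^[j] x))).card : ℝ) / N)
          atTop) :
    ν Λ ≥ ENNReal.ofReal ((1 - ε') ^ 2) := by
  classical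
  have hε1 : (0 : ℝ) ≤ 1 - ε' := by linarith
  -- truncated sets
  set L : ℕ → Set X := fun K => {y | ∀ k : ℕ, 1 ≤ k → k ≤ K →
      γ * (k : ℝ) ≤ ∑ j ∈ Finset.Icc 1 k, φ (S^[j] y)} with hLdef
  have hLmeas : ∀ K, MeasurableSet (L K) := by
    intro K
    have hrw : L K = ⋂ k ∈ Finset.Icc 1 K,
        {y : X | γ * (k : ℝ) ≤ ∑ j ∈ Finset.Icc 1 k, φ (S^[j] y)} := by
      ext y
      simp only [hLdef, Set.mem_setOf_eq, Set.mem_iInter, Finset.mem_Icc]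
      exact ⟨fun h k hk => h k hk.1 hk.2, fun h k h1 h2 => h k ⟨h1, h2⟩⟩
    rw [hrw]
    refine Set.Finite.measurableSet_biInter (Finset.Icc 1 K).finite_toSet fun k _ => ?_
    exact measurableSet_le measurable_const
      (Finset.measurable_sum _ fun j _ => hφ.comp (hSmeas.iterate j))
  have hΛeq : Λ = ⋂ K, L K := by
    rw [hΛ]
    ext y
    simp only [Set.mem_iInter, hLdef, Set.mem_setOf_eq]
    exact ⟨fun h K k h1 _ => h k h1, fun h k h1 => h k k h1 le_rfl⟩
  have hmono : Antitone L := by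
    intro a b hab y hy k h1 hk
    exact hy k h1 (hk.trans hab)
  -- key estimate for each K
  have key : ∀ K : ℕ, ENNReal.ofReal (1 - ε') * ν A ≤ ν (L K) := by
    intro K
    -- the averaged visit functions
    set g : ℕ → X → ENNReal := fun N x =>
      (∑ n ∈ Finset.Icc 1 N, Set.indicator (L K) (1 : X → ENNReal) (T^[n] x)) / N
      with hgdef
    have hgmeas : ∀ N, Measurable (g N) := by
      intro N
      apply Measurable.div _ measurable_const
      exact Finset.measurable_sum _ fun n _ =>
        ((measurable_one.indicator (hLmeas K)).comp (hTmeas.iterate n))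
    -- integral of g N over X is ν (L K), for N ≥ 1
    have hint : ∀ N : ℕ, 1 ≤ N → ∫⁻ x, g N x ∂ν = ν (L K) := by
      intro N hN
      have h1 : ∀ n : ℕ, ∫⁻ x, Set.indicator (L K) (1 : X → ENNReal) (T^[n] x) ∂ν
          = ν (L K) := by
        intro n
        have hpre : ∀ x : X, Set.indicator (L K) (1 : X → ENNReal) (T^[n] x)
            = Set.indicator (T^[n] ⁻¹' L K) (1 : X → ENNReal) x := by
          intro x
          by_cases h : T^[n] x ∈ L K <;>
            simp [Set.indicator_apply, h, Set.mem_preimage]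
        simp_rw [hpre]
        rw [lintegral_indicator_one ((hLmeas K).preimage (hTmeas.iterate n))]
        exact (hT.iterate n).measure_preimage (hLmeas K).nullMeasurableSet
      have h2 : ∫⁻ x, (∑ n ∈ Finset.Icc 1 N,
          Set.indicator (L K) (1 : X → ENNReal) (T^[n] x)) ∂ν
          = (N : ENNReal) * ν (L K) := by
        rw [lintegral_finset_sum]
        · simp_rw [h1]
          rw [Finset.sum_const, Nat.card_Icc]
          simp [nsmul_eq_mul]
        · exact fun n _ =>
            (measurable_one.indicator (hLmeas K)).comp (hTmeas.iterate n)
      have hN0 : (N : ENNReal) ≠ 0 := Nat.cast_ne_zero.mpr (by omega)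
      simp only [hgdef]
      simp_rw [div_eq_mul_inv]
      have hmsum : Measurable fun x : X =>
          ∑ n ∈ Finset.Icc 1 N, Set.indicator (L K) (1 : X → ENNReal) (T^[n] x) := by
        exact Finset.measurable_sum _ fun n _ =>
          (measurable_one.indicator (hLmeas K)).comp (hTmeas.iterate n)
      rw [lintegral_mul_const _ hmsum, h2,
        mul_comm (N : ENNReal), mul_assoc,
        ENNReal.mul_inv_cancel hN0 (by simp), mul_one]
    -- pointwise lower bound of liminf on A
    have hpt : ∀ x ∈ A, ENNReal.ofReal (1 - ε') ≤ liminf (fun N => g N x) atTop := by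
      intro x hx
      set u : ℕ → ℝ := fun N => (((Finset.Icc 1 N).filter (fun n =>
          ∀ m : ℕ, m < n →
            γ * ((n : ℝ) - (m : ℝ)) ≤ ∑ j ∈ Finset.Ico m n, φ (T^[j] x))).card : ℝ) / N
        with hudef
      have hu0 : ∀ N, 0 ≤ u N := fun N => by positivity
      have hbdd : IsBoundedUnder (· ≥ ·) atTop u :=
        isBoundedUnder_of ⟨0, fun N => hu0 N⟩
      obtain ⟨b, hb1, hb2⟩ := exists_between (hfreq x hx)
      have hev1 : ∀ᶠ N in atTop, b < u N := eventually_lt_of_lt_liminf hb2 hbdd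
      have hev2 : ∀ᶠ N : ℕ in atTop, (K : ℝ) / (N : ℝ) < b - (1 - ε') := by
        have h0 := tendsto_const_div_atTop_nhds_zero_nat (K : ℝ)
        exact h0.eventually_lt_const (by linarith)
      have hev3 : ∀ᶠ N in atTop, 1 ≤ N := eventually_ge_atTop 1
      refine le_liminf_of_le (by isBoundedDefault) ?_
      filter_upwards [hev1, hev2, hev3] with N hb hKN hN1
      -- combinatorial estimate
      set P : Finset ℕ := (Finset.Icc 1 N).filter (fun n =>
          ∀ m : ℕ, m < n →
            γ * ((n : ℝ) - (m : ℝ)) ≤ ∑ j ∈ Finset.Ico m n, φ (T^[j] x)) with hPdef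
      set Q : Finset ℕ := (Finset.Icc 1 N).filter (fun n => T^[n] x ∈ L K) with hQdef
      -- Pliss times ≥ K land in L K
      have hsub : P.filter (fun n => K ≤ n) ⊆ Q := by
        intro n hn
        simp only [Finset.mem_filter, hPdef] at hn
        obtain ⟨⟨hnIcc, hpliss⟩, hKn⟩ := hn
        simp only [hQdef, Finset.mem_filter]
        refine ⟨hnIcc, ?_⟩
        intro k hk1 hkK
        have hkn : k ≤ n := hkK.trans hKn
        have hiter : ∀ j ∈ Finset.Icc 1 k, φ (S^[j] (T^[n] x)) = φ (T^[n - j] x) := by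
          intro j hj
          rw [iter_inv_aux hST j n (le_trans (Finset.mem_Icc.mp hj).2 hkn)]
        rw [Finset.sum_congr rfl hiter]
        have hre : ∑ j ∈ Finset.Icc 1 k, φ (T^[n - j] x)
            = ∑ i ∈ Finset.Ico (n - k) n, φ (T^[i] x) := by
          apply Finset.sum_nbij' (fun j => n - j) (fun i => n - i)
          · intro a ha
            simp only [Finset.mem_Icc] at ha
            simp only [Finset.mem_Ico]
            omega
          · intro a ha
            simp only [Finset.mem_Ico] at ha
            simp only [Finset.mem_Icc]
            omega
          · intro a ha
            simp only [Finset.mem_Icc] at ha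
            omega
          · intro a ha
            simp only [Finset.mem_Ico] at ha
            omega
          · intro a _
            rfl
        rw [hre]
        have := hpliss (n - k) (by omega)
        have hcast : ((n : ℝ) - ((n - k : ℕ) : ℝ)) = (k : ℝ) := by
          rw [Nat.cast_sub hkn]; ring
        rwa [hcast] at this
      -- card bound : P.card ≤ Q.card + K
      have hcard : P.card ≤ Q.card + K := by
        have hsplit : (P.filter (fun n => K ≤ n)).card
            + (P.filter (fun n => ¬ K ≤ n)).card = P.card :=
          Finset.card_filter_add_card_filter_not _
        have h1 : (P.filter (fun n => K ≤ n)).card ≤ Q.card :=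
          Finset.card_le_card hsub
        have h2 : (P.filter (fun n => ¬ K ≤ n)).card ≤ K := by
          have : P.filter (fun n => ¬ K ≤ n) ⊆ Finset.range K := by
            intro n hn
            simp only [Finset.mem_filter, not_le] at hn
            exact Finset.mem_range.mpr hn.2
          simpa using Finset.card_le_card this
        omega
      -- compute g N x
      have hgval : g N x = ((Q.card : ENNReal)) / N := by
        simp only [hgdef]
        congr 1
        rw [hQdef]
        rw [Finset.card_filter]
        push_cast
        apply Finset.sum_congr rfl
        intro n _
        by_cases h : T^[n] x ∈ L K <;> simp [Set.indicator_apply, h]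
      -- real estimate
      have hNpos : (0 : ℝ) < N := by exact_mod_cast hN1
      have hreal : (1 - ε' : ℝ) ≤ (Q.card : ℝ) / N := by
        have hPQ : (P.card : ℝ) / N ≤ ((Q.card : ℝ) + K) / N := by
          gcongr
          exact_mod_cast hcard
        rw [add_div] at hPQ
        have hbu : b < (P.card : ℝ) / N := hb
        linarith
      calc ENNReal.ofReal (1 - ε') ≤ ENNReal.ofReal ((Q.card : ℝ) / N) :=
            ENNReal.ofReal_le_ofReal hreal
        _ = (Q.card : ENNReal) / N := by
            rw [ENNReal.ofReal_div_of_pos hNpos]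
            simp
        _ = g N x := hgval.symm
    -- Fatou argument
    have hfatou : ∫⁻ x in A, liminf (fun N => g N x) atTop ∂ν
        ≤ liminf (fun N => ∫⁻ x in A, g N x ∂ν) atTop :=
      lintegral_liminf_le fun N => hgmeas N
    have hle1 : ∀ N : ℕ, ∫⁻ x in A, g N x ∂ν ≤ ∫⁻ x, g N x ∂ν :=
      fun N => lintegral_mono' Measure.restrict_le_self le_rfl
    have hlim2 : liminf (fun N => ∫⁻ x in A, g N x ∂ν) atTop ≤ ν (L K) := by
      have heq : liminf (fun N : ℕ => ∫⁻ x, g N x ∂ν) atTop = ν (L K) := by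
        have hev : ∀ᶠ N in atTop,
            (fun N : ℕ => ∫⁻ x, g N x ∂ν) N = (fun _ : ℕ => ν (L K)) N := by
          filter_upwards [eventually_ge_atTop 1] with N hN
          exact hint N hN
        rw [liminf_congr hev, liminf_const]
      calc liminf (fun N => ∫⁻ x in A, g N x ∂ν) atTop
          ≤ liminf (fun N : ℕ => ∫⁻ x, g N x ∂ν) atTop :=
            liminf_le_liminf (Eventually.of_forall hle1)
        _ = ν (L K) := heq
    have hlow : ENNReal.ofReal (1 - ε') * ν A
        ≤ ∫⁻ x in A, liminf (fun N => g N x) atTop ∂ν := by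
      rw [← setLIntegral_const A (ENNReal.ofReal (1 - ε'))]
      apply lintegral_mono_ae
      rw [ae_restrict_iff' hAmeas]
      exact ae_of_all _ fun x hx => hpt x hx
    exact hlow.trans (hfatou.trans hlim2)
  -- continuity from above
  have htend : Tendsto (ν ∘ L) atTop (nhds (ν (⋂ K, L K))) :=
    tendsto_measure_iInter_atTop (fun K => (hLmeas K).nullMeasurableSet) hmono
      ⟨0, measure_ne_top ν _⟩
  have hfin : ENNReal.ofReal (1 - ε') * ν A ≤ ν (⋂ K, L K) :=
    ge_of_tendsto' htend fun K => key K
  rw [hΛeq]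
  calc ENNReal.ofReal ((1 - ε') ^ 2)
      = ENNReal.ofReal (1 - ε') * ENNReal.ofReal (1 - ε') := by
        rw [← ENNReal.ofReal_mul hε1, sq]
    _ ≤ ENNReal.ofReal (1 - ε') * ν A := mul_le_mul_right hAν.le _
    _ ≤ ν (⋂ K, L K) := hfin
end
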